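/- In the Weyl group W of type A_{n-1} (the symmetric group S_n), a positive integer d is a regular number (i.e. some element of W has a regular eigenvector with eigenvalue a primitive d-th root of unity in the reflection representation) if and only if d divides n or d divides n−1. -/

import Mathlib

/-!
STATEMENT 5: In the Weyl group of type `A_{n-1}` (the symmetric group `S_n` acting on its
`(n−1)`-dimensional reflection representation `{v ∈ ℂⁿ : ∑ vᵢ = 0}` by permuting
coordinates), a positive integer `d` is a regular number (some element has a regular
eigenvector — one lying on no reflection hyperplane `{vᵢ = vⱼ}` — with eigenvalue
`e^{2πi/d}`) if and only if `d ∣ n` or `d ∣ n − 1`.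
-/

open Complex

/-- A permutation `σ ∈ S_n` acting on `v ∈ ℂⁿ` by `(σ • v) i = v (σ⁻¹ i)` has a regular
`e^{2πi/d}`-eigenvector in the reflection representation: a vector with coordinates summing
to `0`, pairwise distinct coordinates (i.e. lying on no reflection hyperplane), which is an
eigenvector with eigenvalue `e^{2πi/d}`. -/
def IsRegularEigenvector (n d : ℕ) (σ : Equiv.Perm (Fin n)) (v : Fin n → ℂ) : Prop :=
  (∑ i, v i = 0) ∧
  (∀ i j : Fin n, i ≠ j → v i ≠ v j) ∧
  (∀ i : Fin n, v (σ⁻¹ i) = Complex.exp (2 * Real.pi * Complex.I / d) * v i)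

/-- Counting lemma: a finite set of nonzero complex numbers stable under multiplication by a
primitive `d`-th root of unity has cardinality divisible by `d`. -/
lemma card_dvd_of_zeta_stable {d : ℕ} {ζ : ℂ} (hζ : IsPrimitiveRoot ζ d) (hd : 0 < d) :
    ∀ S : Finset ℂ, (0 : ℂ) ∉ S → (∀ x ∈ S, ζ * x ∈ S) → d ∣ S.card := by
  intro S
  induction S using Finset.strongInduction with
  | _ S ih =>
    intro h0 hcl
    rcases S.eq_empty_or_nonempty with rfl | ⟨x, hx⟩
    · simp
    · have hx0 : x ≠ 0 := fun h => h0 (h ▸ hx)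
      have hmem : ∀ k : ℕ, ζ ^ k * x ∈ S := by
        intro k
        induction k with
        | zero => simpa using hx
        | succ k ih' =>
            have h1 := hcl _ ih'
            have h2 : ζ * (ζ ^ k * x) = ζ ^ (k + 1) * x := by ring
            rwa [h2] at h1
      set O : Finset ℂ := (Finset.range d).image (fun k => ζ ^ k * x) with hO
      have hOS : O ⊆ S := by
        intro y hy
        simp only [hO, Finset.mem_image, Finset.mem_range] at hy
        obtain ⟨k, -, rfl⟩ := hy
        exact hmem k
      have hxO : x ∈ O := by
        simp only [hO, Finset.mem_image, Finset.mem_range]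
        exact ⟨0, hd, by simp⟩
      have hOcard : O.card = d := by
        rw [hO, Finset.card_image_of_injOn, Finset.card_range]
        intro i hi j hj hij
        simp only [Finset.mem_coe, Finset.mem_range] at hi hj
        exact hζ.pow_inj hi hj (mul_right_cancel₀ hx0 hij)
      have hmemO : ∀ k : ℕ, ζ ^ k * x ∈ O := by
        intro k
        have : ζ ^ k = ζ ^ (k % d) := pow_eq_pow_mod k hζ.pow_eq_one
        rw [this]
        simp only [hO, Finset.mem_image, Finset.mem_range]
        exact ⟨k % d, Nat.mod_lt _ hd, rfl⟩
      have hzne : ζ ≠ 0 := hζ.ne_zero hd.ne'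
      have hcl' : ∀ y ∈ S \ O, ζ * y ∈ S \ O := by
        intro y hy
        rw [Finset.mem_sdiff] at hy ⊢
        refine ⟨hcl _ hy.1, fun hmemO' => hy.2 ?_⟩
        simp only [hO, Finset.mem_image, Finset.mem_range] at hmemO'
        obtain ⟨k, hk, hky⟩ := hmemO'
        have : ζ * (ζ ^ (k + d - 1) * x) = ζ * y := by
          rw [← hky, ← mul_assoc, ← pow_succ']
          have : k + d - 1 + 1 = k + d := by omega
          rw [this, pow_add, hζ.pow_eq_one, mul_one]
        have hyform := mul_left_cancel₀ hzne this
        rw [← hyform]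
        exact hmemO _
      have h0' : (0 : ℂ) ∉ S \ O := fun h => h0 (Finset.mem_sdiff.mp h).1
      have hss : S \ O ⊂ S := by
        refine Finset.sdiff_ssubset ?_ ⟨x, hxO⟩
        exact hOS
      have hdvd := ih _ hss h0' hcl'
      have hcards : (S \ O).card + O.card = S.card := Finset.card_sdiff_add_card_eq_card hOS
      rw [← hcards, hOcard]
      exact Nat.dvd_add hdvd dvd_rfl


section Helpers

/-- The building-block vector: on the block `Fin d × Fin m`, coordinate `(s, t)` is
`(t+1)·ξ^s`. -/
noncomputable def wfun (d m : ℕ) (ξ : ℂ) : Fin d × Fin m → ℂ :=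
  fun p => (((p.2 : ℕ) : ℂ) + 1) * ξ ^ ((p.1 : ℕ))

lemma natcast_succ_ne_zero (k : ℕ) : ((k : ℂ) + 1) ≠ 0 := by
  have h : (((k + 1 : ℕ)) : ℂ) ≠ 0 := Nat.cast_ne_zero.mpr (Nat.succ_ne_zero k)
  push_cast at h
  exact h

lemma wfun_ne_zero {d m : ℕ} {ξ : ℂ} (hξ0 : ξ ≠ 0) (p : Fin d × Fin m) :
    wfun d m ξ p ≠ 0 :=
  mul_ne_zero (natcast_succ_ne_zero _) (pow_ne_zero _ hξ0)

lemma wfun_injective {d m : ℕ} {ξ : ℂ} (hξ : IsPrimitiveRoot ξ d) (hd0 : d ≠ 0) :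
    Function.Injective (wfun d m ξ) := by
  have hξabs : ‖ξ‖ = 1 := hξ.norm'_eq_one hd0
  rintro ⟨s, t⟩ ⟨s', t'⟩ h
  have habs := congrArg (‖·‖) h
  simp only [wfun, norm_mul, norm_pow, hξabs, one_pow, mul_one] at habs
  have ht : t = t' := by
    have h1 : ‖(((t : ℕ) : ℂ) + 1)‖ = (t : ℕ) + 1 := by
      rw [show (((t : ℕ) : ℂ) + 1) = (((t : ℕ) + 1 : ℕ) : ℂ) by push_cast; ring,
        Complex.norm_natCast]
      push_cast; ring
    have h2 : ‖(((t' : ℕ) : ℂ) + 1)‖ = (t' : ℕ) + 1 := by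
      rw [show (((t' : ℕ) : ℂ) + 1) = (((t' : ℕ) + 1 : ℕ) : ℂ) by push_cast; ring,
        Complex.norm_natCast]
      push_cast; ring
    rw [h1, h2] at habs
    have h3 : ((t : ℕ) : ℝ) = ((t' : ℕ) : ℝ) := by linarith
    exact Fin.ext (by exact_mod_cast h3)
  subst ht
  have hne : (((t : ℕ) : ℂ) + 1) ≠ 0 := natcast_succ_ne_zero _
  have hpow : ξ ^ (s : ℕ) = ξ ^ (s' : ℕ) := mul_left_cancel₀ hne (by simpa [wfun] using h)
  have : (s : ℕ) = (s' : ℕ) := hξ.pow_inj s.isLt s'.isLt hpow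
  exact Prod.ext (Fin.ext this) rfl

lemma wfun_sum {d m : ℕ} {ξ : ℂ} (hξ : IsPrimitiveRoot ξ d) (hd2 : 2 ≤ d) :
    ∑ p : Fin d × Fin m, wfun d m ξ p = 0 := by
  have hξ1 : ξ ≠ 1 := hξ.ne_one hd2
  have hgeom : ∑ s : Fin d, ξ ^ (s : ℕ) = 0 := by
    rw [Fin.sum_univ_eq_sum_range (fun k => ξ ^ k) d, geom_sum_eq hξ1, hξ.pow_eq_one]
    simp
  rw [Fintype.sum_prod_type]
  have : ∀ s : Fin d, ∑ t : Fin m, wfun d m ξ (s, t)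
      = ξ ^ (s : ℕ) * ∑ t : Fin m, (((t : ℕ) : ℂ) + 1) := by
    intro s
    rw [Finset.mul_sum]
    apply Finset.sum_congr rfl
    intro t _
    simp [wfun]; ring
  rw [Finset.sum_congr rfl (fun s _ => this s), ← Finset.sum_mul, hgeom, zero_mul]

lemma wfun_step {d m : ℕ} [NeZero d] {ζ : ℂ} (hζ : IsPrimitiveRoot ζ d) (hd2 : 2 ≤ d)
    (s : Fin d) (t : Fin m) :
    wfun d m ζ⁻¹ (s - 1, t) = ζ * wfun d m ζ⁻¹ (s, t) := by
  have hζ0 : ζ ≠ 0 := hζ.ne_zero (by omega)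
  have hξ : IsPrimitiveRoot ζ⁻¹ d := hζ.inv
  have h1 : (s - 1) + 1 = s := sub_add_cancel s 1
  have hval : ((s - 1 + 1 : Fin d) : ℕ) = (((s - 1 : Fin d) : ℕ) + 1) % d := by
    rw [Fin.val_add, Fin.val_one', Nat.mod_eq_of_lt (by omega : (1 : ℕ) < d)]
  have E2 : ζ⁻¹ ^ ((s - 1 : Fin d) : ℕ) * ζ⁻¹ = ζ⁻¹ ^ (s : ℕ) := by
    rw [← pow_succ, pow_eq_pow_mod _ hξ.pow_eq_one, ← hval, h1]
  have hinv : ζ * ζ⁻¹ = 1 := mul_inv_cancel₀ hζ0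
  have key : ζ⁻¹ ^ ((s - 1 : Fin d) : ℕ) = ζ * ζ⁻¹ ^ (s : ℕ) := by
    linear_combination ζ * E2 - ζ⁻¹ ^ ((s - 1 : Fin d) : ℕ) * hinv
  simp only [wfun]
  rw [key]; ring

end Helpers

/-- `d` is a regular number for `S_n` (in its reflection representation) iff `d ∣ n` or
`d ∣ n − 1`. -/
theorem regular_number_symmetricGroup_iff (n d : ℕ) (hn : 2 ≤ n) (hd : 1 ≤ d) :
    (∃ (σ : Equiv.Perm (Fin n)) (v : Fin n → ℂ), IsRegularEigenvector n d σ v) ↔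
      (d ∣ n ∨ d ∣ (n - 1)) := by
  have hd0 : d ≠ 0 := by omega
  set ζ : ℂ := Complex.exp (2 * Real.pi * Complex.I / d) with hζdef
  have hprim : IsPrimitiveRoot ζ d := Complex.isPrimitiveRoot_exp d hd0
  constructor
  · rintro ⟨σ, v, hsum, hdist, heig⟩
    have hvinj : Function.Injective v := by
      intro i j hij
      by_contra hne
      exact hdist i j hne hij
    set S : Finset ℂ := Finset.univ.image v with hS
    have hcard : S.card = n := by
      rw [hS, Finset.card_image_of_injective _ hvinj, Finset.card_univ, Fintype.card_fin]
    have hcl : ∀ x ∈ S, ζ * x ∈ S := by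
      intro x hx
      simp only [hS, Finset.mem_image, Finset.mem_univ, true_and] at hx ⊢
      obtain ⟨i, rfl⟩ := hx
      exact ⟨σ⁻¹ i, heig i⟩
    by_cases h0 : (0 : ℂ) ∈ S
    · right
      have hcl' : ∀ x ∈ S.erase 0, ζ * x ∈ S.erase 0 := by
        intro x hx
        rw [Finset.mem_erase] at hx ⊢
        refine ⟨mul_ne_zero (hprim.ne_zero hd0) hx.1, hcl _ hx.2⟩
      have := card_dvd_of_zeta_stable hprim (by omega) (S.erase 0)
        (Finset.notMem_erase _ _) hcl'
      rwa [Finset.card_erase_of_mem h0, hcard] at this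
    · left
      have := card_dvd_of_zeta_stable hprim (by omega) S h0 hcl
      rwa [hcard] at this
  · -- constructions
    intro hdvd
    by_cases hd1 : d = 1
    · -- identity permutation with any vector having distinct coordinates summing to 0
      subst hd1
      refine ⟨1, fun i => 2 * (i : ℕ) - ((n : ℂ) - 1), ?_, ?_, ?_⟩
      · have hgauss : (∑ i ∈ Finset.range n, (i : ℂ)) * 2 = (n : ℂ) * ((n : ℂ) - 1) := by
          have := Finset.sum_range_id_mul_two n
          have hc : (((∑ i ∈ Finset.range n, i) * 2 : ℕ) : ℂ) = ((n * (n - 1) : ℕ) : ℂ) := by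
            exact_mod_cast congrArg (Nat.cast : ℕ → ℂ) this
          push_cast [Nat.cast_sub (by omega : 1 ≤ n)] at hc
          simpa using hc
        have hfin : ∑ i : Fin n, ((i : ℕ) : ℂ) = ∑ i ∈ Finset.range n, (i : ℂ) :=
          Fin.sum_univ_eq_sum_range (fun i => (i : ℂ)) n
        have h1 : ∑ i : Fin n, (2 * ((i : ℕ) : ℂ) - ((n : ℂ) - 1))
            = 2 * (∑ i : Fin n, ((i : ℕ) : ℂ)) - (n : ℂ) * ((n : ℂ) - 1) := by
          rw [Finset.sum_sub_distrib, Finset.mul_sum, Finset.sum_const, Finset.card_univ,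
            Fintype.card_fin, nsmul_eq_mul]
        rw [h1, hfin]
        linear_combination hgauss
      · intro i j hij h
        apply hij
        have : ((i : ℕ) : ℂ) = ((j : ℕ) : ℂ) := by
          linear_combination h / 2
        exact Fin.ext (by exact_mod_cast this)
      · intro i
        simp [Equiv.Perm.one_def]
    · -- `d ≥ 2`
      have hd2 : 2 ≤ d := by omega
      haveI : NeZero d := ⟨hd0⟩
      have hζ0 : ζ ≠ 0 := hprim.ne_zero hd0
      have hξ : IsPrimitiveRoot ζ⁻¹ d := hprim.inv
      have hξ0 : ζ⁻¹ ≠ 0 := hξ.ne_zero hd0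
      rcases hdvd with ⟨m, rfl⟩ | hdvd
      · -- case `d ∣ n`, `n = d * m`
        set e : Fin d × Fin m ≃ Fin (d * m) := finProdFinEquiv with he
        set τ : Equiv.Perm (Fin d × Fin m) :=
          Equiv.prodCongr (Equiv.addRight (1 : Fin d)) (Equiv.refl (Fin m)) with hτ
        refine ⟨(e.symm.trans τ).trans e, fun i => wfun d m ζ⁻¹ (e.symm i), ?_, ?_, ?_⟩
        · rw [Equiv.sum_comp e.symm (wfun d m ζ⁻¹)]
          exact wfun_sum hξ hd2
        · intro i j hij h
          exact hij (e.symm.injective (wfun_injective hξ hd0 h))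
        · intro i
          show wfun d m ζ⁻¹ (e.symm (e (τ.symm (e.symm i)))) = ζ * wfun d m ζ⁻¹ (e.symm i)
          rw [Equiv.symm_apply_apply]
          rcases hq : e.symm i with ⟨s, t⟩
          have hτs : τ.symm (s, t) = (s - 1, t) := by
            simp [hτ, Equiv.prodCongr_symm, sub_eq_add_neg]
          rw [hτs]
          exact wfun_step hprim hd2 s t
      · -- case `d ∣ n - 1`, `n = d * m + 1`
        obtain ⟨m, hm⟩ := hdvd
        have hn' : n = d * m + 1 := by omega
        subst hn'
        set e : Fin d × Fin m ≃ Fin (d * m) := finProdFinEquiv with he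
        set E : (Fin d × Fin m) ⊕ Fin 1 ≃ Fin (d * m + 1) :=
          (Equiv.sumCongr e (Equiv.refl (Fin 1))).trans finSumFinEquiv with hE
        set τ : Equiv.Perm (Fin d × Fin m) :=
          Equiv.prodCongr (Equiv.addRight (1 : Fin d)) (Equiv.refl (Fin m)) with hτ
        set τ2 : Equiv.Perm ((Fin d × Fin m) ⊕ Fin 1) :=
          Equiv.sumCongr τ (Equiv.refl (Fin 1)) with hτ2
        set w2 : (Fin d × Fin m) ⊕ Fin 1 → ℂ :=
          Sum.elim (wfun d m ζ⁻¹) (fun _ => 0) with hw2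
        have hw2inj : Function.Injective w2 := by
          rintro (p | x) (q | y) h
          · exact congrArg Sum.inl (wfun_injective hξ hd0 h)
          · exact absurd h (wfun_ne_zero hξ0 p)
          · exact absurd h.symm (wfun_ne_zero hξ0 q)
          · exact congrArg Sum.inr (Subsingleton.elim x y)
        refine ⟨(E.symm.trans τ2).trans E, fun i => w2 (E.symm i), ?_, ?_, ?_⟩
        · rw [Equiv.sum_comp E.symm w2]
          rw [Fintype.sum_sum_type]
          simp only [hw2, Sum.elim_inl, Sum.elim_inr]
          rw [wfun_sum hξ hd2]
          simp
        · intro i j hij h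
          exact hij (E.symm.injective (hw2inj h))
        · intro i
          show w2 (E.symm (E (τ2.symm (E.symm i)))) = ζ * w2 (E.symm i)
          rw [Equiv.symm_apply_apply]
          rcases hq : E.symm i with p | x
          · obtain ⟨s, t⟩ := p
            have hτ2s : τ2.symm (Sum.inl (s, t)) = Sum.inl (s - 1, t) := by
              simp [hτ2, hτ, Equiv.sumCongr_symm, Equiv.prodCongr_symm, sub_eq_add_neg]
            rw [hτ2s]
            simp only [hw2, Sum.elim_inl]
            exact wfun_step hprim hd2 s t
          · have hτ2s : τ2.symm (Sum.inr x) = Sum.inr x := by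
              simp [hτ2, Equiv.sumCongr_symm]
            rw [hτ2s]
            simp [hw2]
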